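/- Let α be the real root of x³ = x + 1 and A = {1, α, α², α³, α⁴}. Then |AA| = 9 = 2·5 - 1 and |A+A| = 14 < 5·6/2 = 15, so A is not a Sidon set despite |AA| ≤ 3·5 - 4; hence the Sidon Exclusion Zone theorem fails for sets of positive reals with n = 5. -/

import Mathlib

open Finset Pointwise

set_option maxHeartbeats 2000000

theorem stmt_6 (α : ℝ) (hα : α ^ 3 = α + 1) (hα1 : 1 < α)
    (A : Finset ℝ) (hA : A = {1, α, α ^ 2, α ^ 3, α ^ 4}) :
    (A * A).card = 9 ∧ (A * A).card ≤ 3 * 5 - 4 ∧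
      (A + A).card = 14 ∧ (A + A).card < 5 * 6 / 2 := by
  have hl : (1.32 : ℝ) < α := by nlinarith [hα, sq_nonneg (α - 1.32), sq_nonneg α, hα1]
  have hu : α < 1.33 := by nlinarith [hα, sq_nonneg (α - 1.33), sq_nonneg α, hα1]
  have e4 : α ^ 4 = α ^ 2 + α := by nlinarith [hα]
  -- product set
  have hM : A * A = ([1, α, α^2, α^3, α^4, α^5, α^6, α^7, α^8] : List ℝ).toFinset := by
    subst hA
    ext x
    simp only [Finset.mem_mul, Finset.mem_insert, Finset.mem_singleton, List.toFinset_cons,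
      List.toFinset_nil, LawfulSingleton.insert_empty_eq, Finset.mem_insert, Finset.mem_singleton]
    constructor
    · rintro ⟨a, ha, b, hb, rfl⟩
      rcases ha with rfl|rfl|rfl|rfl|rfl <;> rcases hb with rfl|rfl|rfl|rfl|rfl <;>
        ring_nf <;> simp
    · rintro (h|h|h|h|h|h|h|h|h)
      · exact ⟨1, Or.inl rfl, 1, Or.inl rfl, by rw [h]; ring⟩
      · exact ⟨1, Or.inl rfl, α, Or.inr (Or.inl rfl), by rw [h]; ring⟩
      · exact ⟨1, Or.inl rfl, α^2, Or.inr (Or.inr (Or.inl rfl)), by rw [h]; ring⟩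
      · exact ⟨1, Or.inl rfl, α^3, Or.inr (Or.inr (Or.inr (Or.inl rfl))), by rw [h]; ring⟩
      · exact ⟨1, Or.inl rfl, α^4, Or.inr (Or.inr (Or.inr (Or.inr rfl))), by rw [h]; ring⟩
      · exact ⟨α, Or.inr (Or.inl rfl), α^4, Or.inr (Or.inr (Or.inr (Or.inr rfl))), by rw [h]; ring⟩
      · exact ⟨α^2, Or.inr (Or.inr (Or.inl rfl)), α^4, Or.inr (Or.inr (Or.inr (Or.inr rfl))), by rw [h]; ring⟩
      · exact ⟨α^3, Or.inr (Or.inr (Or.inr (Or.inl rfl))), α^4, Or.inr (Or.inr (Or.inr (Or.inr rfl))), by rw [h]; ring⟩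
      · exact ⟨α^4, Or.inr (Or.inr (Or.inr (Or.inr rfl))), α^4, Or.inr (Or.inr (Or.inr (Or.inr rfl))), by rw [h]; ring⟩
  have hMnd : ([1, α, α^2, α^3, α^4, α^5, α^6, α^7, α^8] : List ℝ).Nodup := by
    have hc : List.Chain' (· < ·) ([1, α, α^2, α^3, α^4, α^5, α^6, α^7, α^8] : List ℝ) := by
      simp only [List.Chain', List.isChain_cons_cons, List.isChain_singleton, and_true]
      refine ⟨?_, ?_, ?_, ?_, ?_, ?_, ?_, ?_⟩ <;>
        first
        | exact hα1
        | exact pow_lt_pow_right₀ hα1 (by norm_num)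
        | · nth_rewrite 1 [show α = α ^ 1 by ring]
            exact pow_lt_pow_right₀ hα1 (by norm_num)
    exact ((List.isChain_iff_pairwise).mp hc).imp ne_of_lt
  have hMcard : (A * A).card = 9 := by
    rw [hM, List.toFinset_card_of_nodup hMnd]; rfl
  -- sum set
  have hS : A + A = ([1+1, 1+α, α+α, 1+α^2, α+α^2, 1+α^3, α^2+α^2, α+α^3, 1+α^4,
      α+α^4, α^3+α^3, α^2+α^4, α^3+α^4, α^4+α^4] : List ℝ).toFinset := by
    subst hA
    ext x
    simp only [Finset.mem_add, Finset.mem_insert, Finset.mem_singleton, List.toFinset_cons,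
      List.toFinset_nil, LawfulSingleton.insert_empty_eq, Finset.mem_insert, Finset.mem_singleton]
    constructor
    · rintro ⟨a, ha, b, hb, rfl⟩
      rcases ha with rfl|rfl|rfl|rfl|rfl <;> rcases hb with rfl|rfl|rfl|rfl|rfl <;>
        simp only [hα, e4] <;> ring_nf <;> simp
    · rintro (h|h|h|h|h|h|h|h|h|h|h|h|h|h)
      · exact ⟨1, Or.inl rfl, 1, Or.inl rfl, by rw [h]⟩
      · exact ⟨1, Or.inl rfl, α, Or.inr (Or.inl rfl), by rw [h]⟩
      · exact ⟨α, Or.inr (Or.inl rfl), α, Or.inr (Or.inl rfl), by rw [h]⟩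
      · exact ⟨1, Or.inl rfl, α^2, Or.inr (Or.inr (Or.inl rfl)), by rw [h]⟩
      · exact ⟨α, Or.inr (Or.inl rfl), α^2, Or.inr (Or.inr (Or.inl rfl)), by rw [h]⟩
      · exact ⟨1, Or.inl rfl, α^3, Or.inr (Or.inr (Or.inr (Or.inl rfl))), by rw [h]⟩
      · exact ⟨α^2, Or.inr (Or.inr (Or.inl rfl)), α^2, Or.inr (Or.inr (Or.inl rfl)), by rw [h]⟩
      · exact ⟨α, Or.inr (Or.inl rfl), α^3, Or.inr (Or.inr (Or.inr (Or.inl rfl))), by rw [h]⟩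
      · exact ⟨1, Or.inl rfl, α^4, Or.inr (Or.inr (Or.inr (Or.inr rfl))), by rw [h]⟩
      · exact ⟨α, Or.inr (Or.inl rfl), α^4, Or.inr (Or.inr (Or.inr (Or.inr rfl))), by rw [h]⟩
      · exact ⟨α^3, Or.inr (Or.inr (Or.inr (Or.inl rfl))), α^3, Or.inr (Or.inr (Or.inr (Or.inl rfl))), by rw [h]⟩
      · exact ⟨α^2, Or.inr (Or.inr (Or.inl rfl)), α^4, Or.inr (Or.inr (Or.inr (Or.inr rfl))), by rw [h]⟩
      · exact ⟨α^3, Or.inr (Or.inr (Or.inr (Or.inl rfl))), α^4, Or.inr (Or.inr (Or.inr (Or.inr rfl))), by rw [h]⟩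
      · exact ⟨α^4, Or.inr (Or.inr (Or.inr (Or.inr rfl))), α^4, Or.inr (Or.inr (Or.inr (Or.inr rfl))), by rw [h]⟩
  have hSnd : ([1+1, 1+α, α+α, 1+α^2, α+α^2, 1+α^3, α^2+α^2, α+α^3, 1+α^4,
      α+α^4, α^3+α^3, α^2+α^4, α^3+α^4, α^4+α^4] : List ℝ).Nodup := by
    have hc : List.Chain' (· < ·) ([1+1, 1+α, α+α, 1+α^2, α+α^2, 1+α^3, α^2+α^2, α+α^3, 1+α^4,
        α+α^4, α^3+α^3, α^2+α^4, α^3+α^4, α^4+α^4] : List ℝ) := by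
      simp only [List.Chain', List.isChain_cons_cons, List.isChain_singleton, and_true]
      refine ⟨?_, ?_, ?_, ?_, ?_, ?_, ?_, ?_, ?_, ?_, ?_, ?_, ?_⟩ <;>
        nlinarith [hα, e4, hl, hu, mul_pos (sub_pos.mpr hl) (sub_pos.mpr hl),
          mul_pos (sub_pos.mpr hu) (sub_pos.mpr hu), sq_nonneg (α - 1)]
    exact ((List.isChain_iff_pairwise).mp hc).imp ne_of_lt
  have hScard : (A + A).card = 14 := by
    rw [hS, List.toFinset_card_of_nodup hSnd]; rfl
  exact ⟨hMcard, by omega, hScard, by omega⟩
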